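/- For any a ∈ ℕ and b ≥ 2, the ordered Ramsey number of the start-central star of order a versus the monotone cycle of order b equals 1 + (a−1)(b−1). -/

import Mathlib

open SimpleGraph Finset

/-- A symmetric `k`-edge-coloring `χ` of the complete graph on `Fin n` contains a copy of `H`
in color `j` via a strictly increasing embedding. -/
def ContainsOrd {m n k : ℕ} (H : SimpleGraph (Fin m))
    (χ : Fin n → Fin n → Fin k) (j : Fin k) : Prop :=
  ∃ φ : Fin m → Fin n, StrictMono φ ∧ ∀ u v : Fin m, H.Adj u v → χ (φ u) (φ v) = j

/-- Contains a copy via an embedding that is increasing up to a cyclic permutation. -/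
def ContainsCyc {m n k : ℕ} (H : SimpleGraph (Fin m))
    (χ : Fin n → Fin n → Fin k) (j : Fin k) : Prop :=
  ∃ φ : Fin m → Fin n, (∃ t : Fin m, StrictMono fun i : Fin m => φ (i + t)) ∧
    ∀ u v : Fin m, H.Adj u v → χ (φ u) (φ v) = j

/-- Contains a copy via an arbitrary injective embedding. -/
def ContainsStd {m n k : ℕ} (H : SimpleGraph (Fin m))
    (χ : Fin n → Fin n → Fin k) (j : Fin k) : Prop :=
  ∃ φ : Fin m → Fin n, Function.Injective φ ∧ ∀ u v : Fin m, H.Adj u v → χ (φ u) (φ v) = j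

/-- The ordered Ramsey number of a family of graphs. -/
noncomputable def Rord {k : ℕ} (m : Fin k → ℕ) (H : ∀ j, SimpleGraph (Fin (m j))) : ℕ :=
  sInf {n | ∀ χ : Fin n → Fin n → Fin k, (∀ u v, χ u v = χ v u) → ∃ j, ContainsOrd (H j) χ j}

/-- The cyclic Ramsey number of a family of graphs. -/
noncomputable def Rcyc {k : ℕ} (m : Fin k → ℕ) (H : ∀ j, SimpleGraph (Fin (m j))) : ℕ :=
  sInf {n | ∀ χ : Fin n → Fin n → Fin k, (∀ u v, χ u v = χ v u) → ∃ j, ContainsCyc (H j) χ j}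

/-- The standard Ramsey number of a family of graphs. -/
noncomputable def Rstd {k : ℕ} (m : Fin k → ℕ) (H : ∀ j, SimpleGraph (Fin (m j))) : ℕ :=
  sInf {n | ∀ χ : Fin n → Fin n → Fin k, (∀ u v, χ u v = χ v u) → ∃ j, ContainsStd (H j) χ j}

/-- The two-color ordered Ramsey number. -/
noncomputable def Rord2 {a b : ℕ} (H₁ : SimpleGraph (Fin a)) (H₂ : SimpleGraph (Fin b)) : ℕ :=
  sInf {n | ∀ χ : Fin n → Fin n → Fin 2, (∀ u v, χ u v = χ v u) →
    ContainsOrd H₁ χ 0 ∨ ContainsOrd H₂ χ 1}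

/-- The two-color cyclic Ramsey number. -/
noncomputable def Rcyc2 {a b : ℕ} (H₁ : SimpleGraph (Fin a)) (H₂ : SimpleGraph (Fin b)) : ℕ :=
  sInf {n | ∀ χ : Fin n → Fin n → Fin 2, (∀ u v, χ u v = χ v u) →
    ContainsCyc H₁ χ 0 ∨ ContainsCyc H₂ χ 1}

/-- The monotone path of order `n`. -/
def monPath (n : ℕ) : SimpleGraph (Fin n) :=
  SimpleGraph.fromRel fun u v => (u : ℕ) + 1 = (v : ℕ)

/-- The monotone cycle of order `n`. -/
def monCycle (n : ℕ) : SimpleGraph (Fin n) :=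
  SimpleGraph.fromRel fun u v => (u : ℕ) + 1 = (v : ℕ) ∨ ((u : ℕ) = 0 ∧ (v : ℕ) = n - 1)

/-- The start-central star of order `n` (center `0`). -/
def starSC (n : ℕ) : SimpleGraph (Fin n) :=
  SimpleGraph.fromRel fun u _ => (u : ℕ) = 0

/-- The star of order `n` with center `c`. -/
def starG (n : ℕ) (c : Fin n) : SimpleGraph (Fin n) :=
  SimpleGraph.fromRel fun u _ => u = c

/-- The nested matching of order `n`. -/
def nestedMatching (n : ℕ) : SimpleGraph (Fin n) :=
  SimpleGraph.fromRel fun u v => (u : ℕ) + (v : ℕ) = n - 1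

/-- Rotational isomorphism of two graphs on `Fin m`. -/
def RotIso {m : ℕ} (G₁ G₂ : SimpleGraph (Fin m)) : Prop :=
  ∃ s : Fin m, ∀ u v : Fin m, G₁.Adj u v ↔ G₂.Adj (u + s) (v + s)

lemma consec_gap {k : ℕ} (g : Fin k → ℕ)
    (h : ∀ (i : ℕ) (hi : i + 1 < k), g ⟨i, by omega⟩ < g ⟨i + 1, hi⟩) :
    ∀ (j : ℕ) (hj : j < k), j + g ⟨0, by omega⟩ ≤ g ⟨j, hj⟩ := by
  intro j
  induction j with
  | zero => intro hj; simp
  | succ n ih =>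
      intro hj
      have h1 := h n hj
      have h2 := ih (by omega)
      omega


def IsPath {N : ℕ} (χ : Fin N → Fin N → Fin 2) (S : Finset (Fin N)) (k : ℕ) (v : Fin N) : Prop :=
  ∃ φ : Fin k → Fin N, StrictMono φ ∧ (∀ i, φ i ∈ S) ∧
    (∀ (i : ℕ) (hi : i + 1 < k), χ (φ ⟨i, by omega⟩) (φ ⟨i + 1, hi⟩) = 1) ∧
    ∀ (hk : 0 < k), φ ⟨k - 1, by omega⟩ = v

lemma isPath_one {N : ℕ} {χ : Fin N → Fin N → Fin 2} {S : Finset (Fin N)} {v : Fin N}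
    (hv : v ∈ S) : IsPath χ S 1 v := by
  refine ⟨fun _ => v, ?_, fun _ => hv, by omega, fun _ => rfl⟩
  intro i j hij
  exact absurd (Fin.lt_def.mp hij) (by have := i.isLt; have := j.isLt; omega)

lemma isPath_le {N : ℕ} {χ : Fin N → Fin N → Fin 2} {S : Finset (Fin N)} {k : ℕ} {v : Fin N}
    (h : IsPath χ S k v) : k ≤ N := by
  obtain ⟨φ, hm, -, -, -⟩ := h
  simpa using Fintype.card_le_of_injective φ hm.injective

lemma isPath_extend {N : ℕ} {χ : Fin N → Fin N → Fin 2} {S : Finset (Fin N)} {k : ℕ} {u v : Fin N}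
    (h : IsPath χ S k u) (hk : 0 < k) (huv : u < v) (hv : v ∈ S) (hc : χ u v = 1) :
    IsPath χ S (k + 1) v := by
  obtain ⟨φ, hm, hS, hE, hL⟩ := h
  have hlast : φ ⟨k - 1, by omega⟩ = u := hL hk
  refine ⟨fun i => if hik : (i : ℕ) < k then φ ⟨i, hik⟩ else v, ?_, ?_, ?_, ?_⟩
  · intro i j hij
    have hij' := Fin.lt_def.mp hij
    have hi := i.isLt; have hj := j.isLt
    by_cases hjk : (j : ℕ) < k
    · simp only [dif_pos (show (i:ℕ) < k by omega), dif_pos hjk]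
      exact hm (Fin.mk_lt_mk.mpr (by omega))
    · by_cases hik : (i : ℕ) < k
      · simp only [dif_pos hik, dif_neg hjk]
        calc φ ⟨i, hik⟩ ≤ φ ⟨k - 1, by omega⟩ := hm.monotone (Fin.mk_le_mk.mpr (by omega))
          _ = u := hlast
          _ < v := huv
      · omega
  · intro i
    by_cases hik : (i : ℕ) < k
    · simp only [dif_pos hik]; exact hS _
    · simp only [dif_neg hik]; exact hv
  · intro i hi
    by_cases hik : i + 1 < k
    · simp only [dif_pos (show i < k by omega), dif_pos hik]
      exact hE i hik
    · have hik' : i + 1 = k := by omega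
      simp only [dif_pos (show i < k by omega), dif_neg (show ¬ (i + 1 < k) by omega)]
      have : (⟨i, show i < k by omega⟩ : Fin k) = ⟨k - 1, by omega⟩ := by
        exact Fin.mk_eq_mk.mpr (by omega)
      rw [this, hlast]; exact hc
  · intro _
    simp only [Nat.add_sub_cancel]
    simp only [dif_neg (show ¬ (k < k) by omega)]

lemma fin_pos_of_ne_zero {M : ℕ} [NeZero M] {x : Fin M} (h : x ≠ 0) : (0 : Fin M) < x := by
  rcases Nat.eq_zero_or_pos x.val with h0 | h0
  · exact absurd (Fin.ext (by simp [h0])) h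
  · exact Fin.lt_def.mpr (by simpa using h0)

lemma mem_upper (a b : ℕ) (ha : 1 ≤ a) (hb : 2 ≤ b)
    (χ : Fin (1 + (a - 1) * (b - 1)) → Fin (1 + (a - 1) * (b - 1)) → Fin 2)
    (hsym : ∀ u v, χ u v = χ v u) :
    ContainsOrd (starSC a) χ 0 ∨ ContainsOrd (monCycle b) χ 1 := by
  classical
  haveI : NeZero (1 + (a - 1) * (b - 1)) := ⟨by omega⟩
  have two : ∀ x : Fin 2, x = 0 ∨ x = 1 := by decide
  rcases eq_or_lt_of_le ha with ha1 | ha2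
  · left
    refine ⟨fun _ => ⟨0, by omega⟩, ?_, ?_⟩
    · intro i j hij
      exact absurd (Fin.lt_def.mp hij) (by have := i.isLt; have := j.isLt; omega)
    · intro u v huv
      rw [starSC, SimpleGraph.fromRel_adj] at huv
      exact absurd (Fin.ext (by have := u.isLt; have := v.isLt; omega)) huv.1
  set T : Finset (Fin (1 + (a - 1) * (b - 1))) := univ.filter (fun v => v ≠ 0 ∧ χ 0 v = 0) with hT
  by_cases hTc : a - 1 ≤ T.card
  · left
    obtain ⟨T', hT'sub, hT'card⟩ := Finset.exists_subset_card_eq (s := T) (n := a - 1) hTc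
    set e := T'.orderEmbOfFin hT'card with he
    have heT : ∀ i, e i ∈ T := fun i => hT'sub (T'.orderEmbOfFin_mem hT'card i)
    have heZ : ∀ i, e i ≠ 0 := fun i => (Finset.mem_filter.mp (heT i)).2.1
    have heC : ∀ i, χ 0 (e i) = 0 := fun i => (Finset.mem_filter.mp (heT i)).2.2
    refine ⟨fun i => if h0 : (i : ℕ) = 0 then (0 : Fin (1 + (a - 1) * (b - 1)))
      else e ⟨(i : ℕ) - 1, by have := i.isLt; omega⟩, ?_, ?_⟩
    · intro i j hij
      have hij' := Fin.lt_def.mp hij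
      have hj0 : ¬ ((j : ℕ) = 0) := by omega
      by_cases hi0 : (i : ℕ) = 0
      · simp only [dif_pos hi0, dif_neg hj0]
        exact fin_pos_of_ne_zero (heZ _)
      · simp only [dif_neg hi0, dif_neg hj0]
        exact e.strictMono (Fin.mk_lt_mk.mpr (by omega))
    · intro u v huv
      rw [starSC, SimpleGraph.fromRel_adj] at huv
      obtain ⟨hne, hor⟩ := huv
      have hvals : (u : ℕ) ≠ (v : ℕ) := fun h => hne (Fin.ext h)
      rcases hor with hu0 | hv0
      · have hv0' : ¬ ((v : ℕ) = 0) := by omega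
        simp only [dif_pos hu0, dif_neg hv0']
        exact heC _
      · have hu0' : ¬ ((u : ℕ) = 0) := by omega
        simp only [dif_pos hv0, dif_neg hu0']
        rw [hsym]
        exact heC _
  push_neg at hTc
  set S : Finset (Fin (1 + (a - 1) * (b - 1))) := univ.filter (fun v => v ≠ 0 ∧ χ 0 v = 1) with hS
  have hSmem : ∀ v, v ∈ S ↔ (v ≠ 0 ∧ χ 0 v = 1) := by intro v; simp [hS]
  have hcardST : S.card + T.card = (a - 1) * (b - 1) := by
    have hdisj : Disjoint S T := by
      rw [Finset.disjoint_left]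
      intro x hx hx'
      have h1 := (Finset.mem_filter.mp hx).2.2
      have h2 := (Finset.mem_filter.mp hx').2.2
      rw [h1] at h2; exact absurd h2 (by decide)
    have hunion : S ∪ T = univ.erase 0 := by
      ext v
      simp only [hS, hT, Finset.mem_union, Finset.mem_erase, Finset.mem_filter,
        Finset.mem_univ, true_and, and_true]
      constructor
      · rintro (⟨h1, -⟩ | ⟨h1, -⟩) <;> exact h1
      · intro h1
        rcases two (χ 0 v) with h | h
        · right; exact ⟨h1, h⟩
        · left; exact ⟨h1, h⟩
    have hcu := Finset.card_union_of_disjoint hdisj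
    rw [hunion, Finset.card_erase_of_mem (Finset.mem_univ 0), Finset.card_univ,
      Fintype.card_fin] at hcu
    omega
  have hmul : (a - 1) * (b - 1) = (a - 1) * (b - 2) + (a - 1) := by
    have hb2 : b - 1 = (b - 2) + 1 := by omega
    rw [hb2, Nat.mul_add, Nat.mul_one]
  have hScard : (a - 1) * (b - 2) + 1 ≤ S.card := by omega
  set lp : Fin (1 + (a - 1) * (b - 1)) → ℕ := fun v => sSup {k | IsPath χ S k v} with hlp
  have hbdd : ∀ v, BddAbove {k | IsPath χ S k v} := fun v => ⟨1 + (a - 1) * (b - 1), fun k hk => isPath_le hk⟩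
  have hlp1 : ∀ v ∈ S, 1 ≤ lp v := fun v hv => le_csSup (hbdd v) (isPath_one hv)
  have hmem : ∀ v ∈ S, IsPath χ S (lp v) v := fun v hv =>
    Nat.sSup_mem ⟨1, isPath_one hv⟩ (hbdd v)
  have hstep : ∀ u v, u ∈ S → v ∈ S → u < v → χ u v = 1 → lp u + 1 ≤ lp v := by
    intro u v hu hv huv hc
    exact le_csSup (hbdd v) (isPath_extend (hmem u hu) (by have := hlp1 u hu; omega) huv hv hc)
  by_cases hlong : ∃ v ∈ S, b - 1 ≤ lp v
  · right
    obtain ⟨v, hv, hlv⟩ := hlong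
    obtain ⟨φ, hmono, hSmem', hE, -⟩ := hmem v hv
    have hφZ : ∀ i, φ i ≠ 0 := fun i => ((hSmem _).mp (hSmem' i)).1
    have hφC : ∀ i, χ 0 (φ i) = 1 := fun i => ((hSmem _).mp (hSmem' i)).2
    set Ψ : Fin b → Fin (1 + (a - 1) * (b - 1)) := fun i => if h0 : (i : ℕ) = 0 then (0 : Fin (1 + (a - 1) * (b - 1)))
      else φ ⟨(i : ℕ) - 1, by have := i.isLt; omega⟩ with hΨ
    have key : ∀ p q : Fin b, ((p : ℕ) + 1 = q ∨ ((p : ℕ) = 0 ∧ (q : ℕ) = b - 1)) →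
        χ (Ψ p) (Ψ q) = 1 := by
      intro p q hrel
      rcases hrel with h1 | ⟨h2a, h2b⟩
      · have hq0 : ¬ ((q : ℕ) = 0) := by omega
        by_cases hp0 : (p : ℕ) = 0
        · simp only [hΨ, dif_pos hp0, dif_neg hq0]
          exact hφC _
        · have hE' : ∀ (x y : ℕ) (hx : x < lp v) (hy : y < lp v), y = x + 1 →
              χ (φ ⟨x, hx⟩) (φ ⟨y, hy⟩) = 1 := by
            intro x y hx hy hxy
            subst hxy
            exact hE x hy
          simp only [hΨ, dif_neg hp0, dif_neg hq0]
          have hq := q.isLt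
          exact hE' _ _ _ _ (by omega)
      · have hq0 : ¬ ((q : ℕ) = 0) := by omega
        simp only [hΨ, dif_pos h2a, dif_neg hq0]
        exact hφC _
    refine ⟨Ψ, ?_, ?_⟩
    · intro i j hij
      have hij' := Fin.lt_def.mp hij
      have hj0 : ¬ ((j : ℕ) = 0) := by omega
      by_cases hi0 : (i : ℕ) = 0
      · simp only [hΨ, dif_pos hi0, dif_neg hj0]
        exact fin_pos_of_ne_zero (hφZ _)
      · simp only [hΨ, dif_neg hi0, dif_neg hj0]
        exact hmono (Fin.mk_lt_mk.mpr (by omega))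
    · intro u v' hadj
      rw [monCycle, SimpleGraph.fromRel_adj] at hadj
      obtain ⟨hne, hor⟩ := hadj
      rcases hor with h | h
      · exact key u v' h
      · rw [hsym]; exact key v' u h
  · push_neg at hlong
    have hmaps : ∀ v ∈ S, lp v ∈ Finset.Icc 1 (b - 2) := by
      intro v hv
      rw [Finset.mem_Icc]
      exact ⟨hlp1 v hv, by have := hlong v hv; omega⟩
    have hIcc : (Finset.Icc 1 (b - 2)).card = b - 2 := by rw [Nat.card_Icc]; omega
    have hcard2 : (Finset.Icc 1 (b - 2)).card * (a - 1) < S.card := by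
      rw [hIcc]
      have := Nat.mul_comm (b - 2) (a - 1)
      omega
    obtain ⟨y, hy, hfib⟩ := Finset.exists_lt_card_fiber_of_mul_lt_card_of_maps_to hmaps hcard2
    obtain ⟨C', hC'sub, hC'card⟩ := Finset.exists_subset_card_eq (n := a)
      (by omega : a ≤ (S.filter fun x => lp x = y).card)
    left
    set e := C'.orderEmbOfFin hC'card with he
    have heC : ∀ i, e i ∈ S ∧ lp (e i) = y := by
      intro i
      have hm' := hC'sub (C'.orderEmbOfFin_mem hC'card i)
      exact ⟨(Finset.mem_filter.mp hm').1, (Finset.mem_filter.mp hm').2⟩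
    have hclique : ∀ i j : Fin a, i < j → χ (e i) (e j) = 0 := by
      intro i j hij
      rcases two (χ (e i) (e j)) with h | h
      · exact h
      · exfalso
        have hst := hstep (e i) (e j) (heC i).1 (heC j).1 (e.strictMono hij) h
        rw [(heC i).2, (heC j).2] at hst
        omega
    refine ⟨e, e.strictMono, ?_⟩
    intro u v hadj
    rw [starSC, SimpleGraph.fromRel_adj] at hadj
    obtain ⟨hne, hor⟩ := hadj
    have hvals : (u : ℕ) ≠ (v : ℕ) := fun h => hne (Fin.ext h)
    rcases hor with h | h
    · exact hclique u v (Fin.lt_def.mpr (by omega))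
    · rw [hsym]
      exact hclique v u (Fin.lt_def.mpr (by omega))

lemma lower_col (a b m : ℕ) (ha : 1 ≤ a) (hb : 2 ≤ b) (hm : m ≤ (a - 1) * (b - 1)) :
    ∃ χ : Fin m → Fin m → Fin 2, (∀ u v, χ u v = χ v u) ∧
      ¬ ContainsOrd (starSC a) χ 0 ∧ ¬ ContainsOrd (monCycle b) χ 1 := by
  refine ⟨fun u v => if (u : ℕ) / (a - 1) = (v : ℕ) / (a - 1) then 0 else 1, ?_, ?_, ?_⟩
  · intro u v
    simp only
    by_cases h : (u : ℕ) / (a - 1) = (v : ℕ) / (a - 1)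
    · rw [if_pos h, if_pos h.symm]
    · rw [if_neg h, if_neg (fun h' => h h'.symm)]
  · rintro ⟨φ, hmono, hcol⟩
    rcases eq_or_lt_of_le ha with ha1 | ha2
    · have hz : a - 1 = 0 := by omega
      rw [hz, Nat.zero_mul] at hm
      exact absurd (φ ⟨0, by omega⟩).isLt (by omega)
    · have h0a : 0 < a := by omega
      have haa : a - 1 < a := by omega
      have hadj : (starSC a).Adj ⟨0, h0a⟩ ⟨a - 1, haa⟩ := by
        rw [starSC, SimpleGraph.fromRel_adj]
        constructor
        · intro hc
          have := Fin.mk_eq_mk.mp hc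
          omega
        · left; simp
      have hc := hcol _ _ hadj
      simp only at hc
      have hblock : ((φ ⟨0, h0a⟩ : Fin m) : ℕ) / (a - 1)
          = ((φ ⟨a - 1, haa⟩ : Fin m) : ℕ) / (a - 1) := by
        by_contra hne
        rw [if_neg hne] at hc
        exact absurd hc (by decide)
      have hgap0 := consec_gap (fun i : Fin a => ((φ i : Fin m) : ℕ))
        (fun i hi => Fin.lt_def.mp (hmono (Fin.mk_lt_mk.mpr (by omega)))) (a - 1) haa
      have hgap : (a - 1) + ((φ ⟨0, h0a⟩ : Fin m) : ℕ) ≤ ((φ ⟨a - 1, haa⟩ : Fin m) : ℕ) := hgap0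
      have h1 := Nat.div_add_mod ((φ ⟨0, h0a⟩ : Fin m) : ℕ) (a - 1)
      have h2 := Nat.div_add_mod ((φ ⟨a - 1, haa⟩ : Fin m) : ℕ) (a - 1)
      rw [← hblock] at h2
      have h3 : ((φ ⟨0, h0a⟩ : Fin m) : ℕ) % (a - 1) < a - 1 := Nat.mod_lt _ (by omega)
      have h4 : ((φ ⟨a - 1, haa⟩ : Fin m) : ℕ) % (a - 1) < a - 1 := Nat.mod_lt _ (by omega)
      omega
  · rintro ⟨φ, hmono, hcol⟩
    rcases eq_or_lt_of_le ha with ha1 | ha2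
    · have hz : a - 1 = 0 := by omega
      rw [hz, Nat.zero_mul] at hm
      exact absurd (φ ⟨0, by omega⟩).isLt (by omega)
    · have h0b : 0 < b := by omega
      have hbb : b - 1 < b := by omega
      have hstep : ∀ (i : ℕ) (hi : i + 1 < b),
          ((φ ⟨i, by omega⟩ : Fin m) : ℕ) / (a - 1) < ((φ ⟨i + 1, hi⟩ : Fin m) : ℕ) / (a - 1) := by
        intro i hi
        have hadj : (monCycle b).Adj ⟨i, by omega⟩ ⟨i + 1, hi⟩ := by
          rw [monCycle, SimpleGraph.fromRel_adj]
          constructor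
          · intro hc; have := Fin.mk_eq_mk.mp hc; omega
          · left; left; simp
        have hc := hcol _ _ hadj
        simp only at hc
        have hne : ((φ ⟨i, by omega⟩ : Fin m) : ℕ) / (a - 1)
            ≠ ((φ ⟨i + 1, hi⟩ : Fin m) : ℕ) / (a - 1) := by
          intro heq
          rw [if_pos heq] at hc
          exact absurd hc (by decide)
        have hle : ((φ ⟨i, by omega⟩ : Fin m) : ℕ) / (a - 1)
            ≤ ((φ ⟨i + 1, hi⟩ : Fin m) : ℕ) / (a - 1) :=
          Nat.div_le_div_right (le_of_lt (Fin.lt_def.mp (hmono (Fin.mk_lt_mk.mpr (by omega)))))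
        omega
      have hgap0 := consec_gap (fun i : Fin b => ((φ i : Fin m) : ℕ) / (a - 1))
        (fun i hi => hstep i hi) (b - 1) hbb
      have hgap : (b - 1) + ((φ ⟨0, h0b⟩ : Fin m) : ℕ) / (a - 1)
          ≤ ((φ ⟨b - 1, hbb⟩ : Fin m) : ℕ) / (a - 1) := hgap0
      have hlt : ((φ ⟨b - 1, hbb⟩ : Fin m) : ℕ) < (a - 1) * (b - 1) :=
        lt_of_lt_of_le (φ _).isLt hm
      have hfin : ((φ ⟨b - 1, hbb⟩ : Fin m) : ℕ) / (a - 1) < b - 1 := by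
        rw [Nat.div_lt_iff_lt_mul (by omega : 0 < a - 1)]
        calc ((φ ⟨b - 1, hbb⟩ : Fin m) : ℕ) < (a - 1) * (b - 1) := hlt
          _ = (b - 1) * (a - 1) := Nat.mul_comm _ _
      have : b - 1 ≤ ((φ ⟨b - 1, hbb⟩ : Fin m) : ℕ) / (a - 1) :=
        le_trans (Nat.le_add_right _ _) hgap
      exact absurd hfin (not_lt.mpr this)

theorem stmt10 (a b : ℕ) (ha : 1 ≤ a) (hb : 2 ≤ b) :
    Rord2 (starSC a) (monCycle b) = 1 + (a - 1) * (b - 1) := by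
  rw [Rord2]
  have hmemN : (1 + (a - 1) * (b - 1)) ∈ {n | ∀ χ : Fin n → Fin n → Fin 2,
      (∀ u v, χ u v = χ v u) → ContainsOrd (starSC a) χ 0 ∨ ContainsOrd (monCycle b) χ 1} :=
    fun χ hχ => mem_upper a b ha hb χ hχ
  apply le_antisymm
  · exact Nat.sInf_le hmemN
  · apply le_csInf ⟨_, hmemN⟩
    intro m hm
    by_contra hlt
    push_neg at hlt
    obtain ⟨χ, hsymm, hs, hc⟩ := lower_col a b m ha hb (by omega)
    rcases hm χ hsymm with h | h
    · exact hs h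
    · exact hc h
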